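/- G_{f₀} has sensitive dependence on initial conditions on (𝒳,d) with sensitivity constant N/2: there exists δ = N/2 > 0 such that for every x ∈ 𝒳 and every neighborhood V of x, there are y ∈ V and n ≥ 0 with d(G_{f₀}^n(x), G_{f₀}^n(y)) > δ... (for N ≥ 2, one may take δ = 1). -/

import Mathlib

open scoped BigOperators
open MeasureTheory ProbabilityTheory

namespace CI

/-- Strategies: sequences with values in {1,…,N}, encoded as `Fin N`. -/
abbrev Strat (N : ℕ) := ℕ → Fin N
/-- States of the system: boolean vectors of length N. -/
abbrev CState (N : ℕ) := Fin N → Bool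
/-- The phase space 𝒳 = {1,…,N}^ℕ × 𝔹^N. -/
abbrev Pt (N : ℕ) := Strat N × CState N

/-- d_e : sum of the discrete metric over the coordinates. -/
noncomputable def de {N : ℕ} (E F : CState N) : ℝ :=
  ∑ k : Fin N, if E k = F k then (0 : ℝ) else 1

/-- d_s(S,Š) = (9/N) Σ_{k≥1} |S^k − Š^k| / 10^k  (indices shifted to start at 0). -/
noncomputable def ds (N : ℕ) (S T : Strat N) : ℝ :=
  (9 / N) * ∑' k : ℕ, |((S k : ℝ)) - ((T k : ℝ))| / 10 ^ (k + 1)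

/-- The distance d = d_e + d_s on 𝒳. -/
noncomputable def dC {N : ℕ} (p q : Pt N) : ℝ := de p.2 q.2 + ds N p.1 q.1

/-- Flip bit k of the state E. -/
def bflip {N : ℕ} (k : Fin N) (E : CState N) : CState N :=
  fun j => if j = k then !(E j) else E j

/-- F_f(k,E): equal to E except possibly in coordinate k, where it is f(E)_k. -/
def Ff {N : ℕ} (f : CState N → CState N) (k : Fin N) (E : CState N) : CState N :=
  fun j => if j = k then f E k else E j

/-- The chaotic-iterations map G_f(S,E) = (σ(S), F_f(S^0,E)). -/
def Gf {N : ℕ} (f : CState N → CState N) (p : Pt N) : Pt N :=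
  (fun n => p.1 (n + 1), Ff f (p.1 0) p.2)

/-- The vectorial negation f₀. -/
def f0 {N : ℕ} (E : CState N) : CState N := fun j => !(E j)

/-- G_{f₀}. -/
def G0 {N : ℕ} : Pt N → Pt N := Gf f0

/-- Open ball for the distance dC. -/
def ballC {N : ℕ} (x : Pt N) (r : ℝ) : Set (Pt N) := {y | dC x y < r}

/-- Open sets of the metric space (𝒳,d). -/
def IsOpenC {N : ℕ} (U : Set (Pt N)) : Prop := ∀ x ∈ U, ∃ ε > 0, ballC x ε ⊆ U

/-- Iterating the flip-one-coordinate dynamics along a strategy. -/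
def runCI {N : ℕ} (S : ℕ → Fin N) (E : CState N) : ℕ → CState N
  | 0 => E
  | n + 1 => bflip (S n) (runCI S E n)

/-- The CIDS (cover-dependent) strategy: S^k = k if k ≤ N and X_k = 1, else S^k = 1
(indices encoded from 0, so "1" is `0 : Fin N`). -/
def cids {N : ℕ} [NeZero N] (X : CState N) : ℕ → Fin N :=
  fun k => if h : k < N then (if X ⟨k, h⟩ then ⟨k, h⟩ else 0) else 0


lemma G0_state {N : ℕ} (S : Strat N) (E : CState N) :
    (G0 (S, E)).2 = bflip (S 0) E := by
  funext j
  simp only [G0, Gf, Ff, f0, bflip]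
  split <;> simp_all

lemma runCI_shift {N : ℕ} (S : Strat N) (E : CState N) (n : ℕ) :
    runCI (fun k => S (k + 1)) (bflip (S 0) E) n = runCI S E (n + 1) := by
  induction n with
  | zero => rfl
  | succ n ih => show bflip _ _ = bflip _ _; rw [ih]

lemma G0_iter {N : ℕ} (S : Strat N) (E : CState N) (n : ℕ) :
    G0^[n] (S, E) = (fun k => S (k + n), runCI S E n) := by
  induction n generalizing S E with
  | zero => rfl
  | succ n ih =>
    rw [Function.iterate_succ_apply]
    have : G0 (S, E) = (fun k => S (k + 1), bflip (S 0) E) := by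
      refine Prod.ext rfl ?_
      exact G0_state S E
    rw [this, ih, runCI_shift]
    refine Prod.ext ?_ rfl
    funext k; simp; ring_nf

lemma decide_odd_succ (c : ℕ) : decide (Odd (c + 1)) = !decide (Odd c) := by
  by_cases h : Odd c <;> simp [Nat.odd_add_one, h, Nat.not_odd_iff_even]

lemma runCI_parity {N : ℕ} (S : Strat N) (E : CState N) (n : ℕ) (j : Fin N) :
    runCI S E n j =
      xor (decide (Odd (((Finset.range n).filter (fun k => S k = j)).card))) (E j) := by
  induction n with
  | zero => simp [runCI]
  | succ n ih =>
    show bflip (S n) (runCI S E n) j = _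
    rw [Finset.range_add_one, Finset.filter_insert]
    by_cases h : S n = j
    · have hnm : n ∉ (Finset.range n).filter (fun k => S k = j) :=
        fun hmem => absurd (Finset.mem_range.1 (Finset.mem_of_mem_filter _ hmem)) (lt_irrefl n)
      subst h
      rw [if_pos rfl, Finset.card_insert_of_notMem hnm, decide_odd_succ]
      simp only [bflip, if_pos rfl, ih]
      cases decide (Odd (((Finset.range n).filter (fun k => S k = S n)).card)) <;>
        cases E (S n) <;> rfl
    · rw [if_neg h]
      have hj : ¬ (j = S n) := fun hh => h hh.symm
      simp only [bflip, if_neg hj, ih]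

lemma ds_tail_le {N : ℕ} (hN : 0 < N) (S T : ℕ → Fin N) (m : ℕ)
    (hagree : ∀ k < m, S k = T k) : ds N S T ≤ (1/10 : ℝ)^m := by
  rw [ds]
  set f : ℕ → ℝ := fun k => |((S k : ℝ)) - ((T k : ℝ))| / 10 ^ (k + 1) with hf
  have hfle : ∀ k, f k ≤ (N : ℝ) * (1/10)^(k+1) := by
    intro k
    have h1 : (S k : ℝ) ≤ N := le_of_lt (by exact_mod_cast (S k).isLt)
    have h2 : (T k : ℝ) ≤ N := le_of_lt (by exact_mod_cast (T k).isLt)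
    have h3 : (0:ℝ) ≤ (S k : ℝ) := by positivity
    have h4 : (0:ℝ) ≤ (T k : ℝ) := by positivity
    have habs : |((S k : ℝ)) - ((T k : ℝ))| ≤ N := abs_le.mpr ⟨by linarith, by linarith⟩
    have hp : ((10:ℝ) ^ (k+1))⁻¹ = (1/10)^(k+1) := by
      rw [one_div, inv_pow]
    calc f k = |((S k : ℝ)) - ((T k : ℝ))| * ((10:ℝ) ^ (k+1))⁻¹ := by
          simp only [hf]; rw [div_eq_mul_inv]
      _ ≤ (N:ℝ) * ((10:ℝ) ^ (k+1))⁻¹ := by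
          apply mul_le_mul_of_nonneg_right habs; positivity
      _ = (N : ℝ) * (1/10)^(k+1) := by rw [hp]
  have hfnn : ∀ k, 0 ≤ f k := fun k => by positivity
  have hgsum : Summable (fun k : ℕ => (N : ℝ) * (1/10)^(k+1)) := by
    apply Summable.mul_left
    exact (summable_geometric_of_lt_one (by norm_num) (by norm_num)).comp_injective
      (add_left_injective 1)
  have hfsum : Summable f := Summable.of_nonneg_of_le hfnn hfle hgsum
  have hzero : ∀ k < m, f k = 0 := by
    intro k hk; simp [hf, hagree k hk]
  have hsplit := (Summable.sum_add_tsum_nat_add (f := f) m hfsum).symm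
  have hfirst : ∑ i ∈ Finset.range m, f i = 0 :=
    Finset.sum_eq_zero (fun i hi => hzero i (Finset.mem_range.1 hi))
  have htail : ∑' i : ℕ, f (i + m) ≤ ∑' i : ℕ, (N:ℝ) * (1/10)^(i + m + 1) := by
    apply Summable.tsum_le_tsum (fun i => hfle (i + m)) (hfsum.comp_injective (add_left_injective m))
    exact hgsum.comp_injective (add_left_injective m)
  have hgeo : ∑' i : ℕ, (N:ℝ) * (1/10)^(i + m + 1) = (N:ℝ) * (1/10)^m * (1/9) := by
    have : ∀ i : ℕ, (N:ℝ) * (1/10)^(i + m + 1) = ((N:ℝ) * (1/10)^(m+1)) * (1/10)^i := by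
      intro i; rw [pow_add, pow_add]; ring
    rw [tsum_congr this, tsum_mul_left, tsum_geometric_of_lt_one (by norm_num) (by norm_num)]
    rw [pow_add]; norm_num; ring
  have hNpos : (0:ℝ) < N := by exact_mod_cast hN
  have hle : ∑' k, f k ≤ (N:ℝ) * (1/10)^m * (1/9) := by
    rw [hsplit, hfirst, zero_add]
    exact htail.trans (le_of_eq hgeo)
  calc (9 / N : ℝ) * ∑' k, f k ≤ (9 / N) * ((N:ℝ) * (1/10)^m * (1/9)) := by
        apply mul_le_mul_of_nonneg_left hle; positivity
    _ = (1/10:ℝ)^m := by field_simp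

lemma ds_nonneg {N : ℕ} (S T : Strat N) : 0 ≤ ds N S T := by
  rw [ds]
  apply mul_nonneg (by positivity)
  exact tsum_nonneg (fun k => by positivity)

lemma de_eq_card {N : ℕ} (X Y : CState N) :
    de X Y = ((Finset.univ.filter (fun j => ¬ (X j = Y j))).card : ℝ) := by
  rw [de, Finset.card_filter]
  push_cast
  apply Finset.sum_congr rfl
  intro j _
  by_cases h : X j = Y j <;> simp [h]

lemma fiber_sum {N : ℕ} (L : ℕ) (f : ℕ → Fin N) :
    ∑ j : Fin N, ((Finset.range L).filter (fun k => f k = j)).card = L := by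
  have h := Finset.card_eq_sum_card_fiberwise
    (s := Finset.range L) (t := (Finset.univ : Finset (Fin N))) (f := f)
    (fun x _ => Finset.mem_univ (f x))
  rw [Finset.card_range] at h
  exact h.symm

lemma decide_odd_add (a b : ℕ) :
    decide (Odd (a + b)) = xor (decide (Odd a)) (decide (Odd b)) := by
  rcases Nat.even_or_odd a with ha | ha <;> rcases Nat.even_or_odd b with hb | hb
  · rw [decide_eq_false (Nat.not_odd_iff_even.mpr (ha.add hb)),
      decide_eq_false (Nat.not_odd_iff_even.mpr ha),
      decide_eq_false (Nat.not_odd_iff_even.mpr hb)]; rfl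
  · rw [decide_eq_true (ha.add_odd hb),
      decide_eq_false (Nat.not_odd_iff_even.mpr ha), decide_eq_true hb]; rfl
  · rw [decide_eq_true (ha.add_even hb),
      decide_eq_true ha, decide_eq_false (Nat.not_odd_iff_even.mpr hb)]; rfl
  · rw [decide_eq_false (Nat.not_odd_iff_even.mpr (ha.add_odd hb)),
      decide_eq_true ha, decide_eq_true hb]; rfl

theorem stmt13 {N : ℕ} (hN : 2 ≤ N) :
    ∀ x : Pt N, ∀ ε > (0 : ℝ), ∃ y : Pt N, dC x y < ε ∧
      ∃ n : ℕ, (N : ℝ) / 2 < dC (G0^[n] x) (G0^[n] y) := by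
  haveI : NeZero N := ⟨by omega⟩
  rintro ⟨S, E⟩ ε hε
  obtain ⟨m, hm⟩ : ∃ m : ℕ, (1/10:ℝ)^m < ε := exists_pow_lt_of_lt_one hε (by norm_num)
  -- counts of S over the window [m, m+2N)
  set c : Fin N → ℕ := fun j => ((Finset.range (2*N)).filter (fun k => S (m+k) = j)).card
    with hc
  set p : Fin N → Bool := fun j => decide (Odd (c j)) with hp
  set d : Fin N → Bool := fun j => decide (Even N ∨ j ≠ 0) with hd
  set q : Fin N → Bool := fun j => xor (p j) (d j) with hq
  set T : ℕ → Fin N := fun k =>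
    if k < m then S k else if h : k - m < N then (if q ⟨k - m, h⟩ then ⟨k - m, h⟩ else 0) else 0
    with hT
  have hagree : ∀ k < m, S k = T k := by
    intro k hk; simp [hT, hk]
  have hTwin : ∀ k : ℕ, T (m + k) =
      if h : k < N then (if q ⟨k, h⟩ then (⟨k, h⟩ : Fin N) else 0) else 0 := by
    intro k
    have h1 : ¬ (m + k < m) := by omega
    have h2 : m + k - m = k := by omega
    simp only [hT, h1, if_false, h2]
  -- counts of T over the window
  set cT : Fin N → ℕ := fun u => ((Finset.range (2*N)).filter (fun k => T (m+k) = u)).card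
    with hcT
  -- filter description for u ≠ 0
  have hfilterT : ∀ u : Fin N, u ≠ 0 →
      ((Finset.range (2*N)).filter (fun k => T (m+k) = u)) =
        (if q u = true then {(u : ℕ)} else ∅) := by
    intro u hu
    ext k
    simp only [Finset.mem_filter, Finset.mem_range, hTwin k]
    constructor
    · rintro ⟨hk2N, hval⟩
      by_cases hk : k < N
      · rw [dif_pos hk] at hval
        by_cases hqk : q ⟨k, hk⟩ = true
        · rw [if_pos hqk] at hval
          rw [hval] at hqk
          rw [if_pos hqk, Finset.mem_singleton, ← hval]
        · rw [if_neg hqk] at hval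
          exact absurd hval.symm hu
      · rw [dif_neg hk] at hval
        exact absurd hval.symm hu
    · intro hk
      by_cases hqu : q u = true
      · rw [if_pos hqu, Finset.mem_singleton] at hk
        subst hk
        have hkN : (u : ℕ) < N := u.isLt
        refine ⟨by omega, ?_⟩
        rw [dif_pos hkN]
        have : (⟨(u : ℕ), hkN⟩ : Fin N) = u := Fin.eta u hkN
        rw [this, if_pos hqu]
      · rw [if_neg hqu] at hk
        exact absurd hk (Finset.notMem_empty k)
  have hcT_ne : ∀ u : Fin N, u ≠ 0 → cT u = (if q u = true then 1 else 0) := by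
    intro u hu
    rw [hcT]; simp only
    rw [hfilterT u hu]
    split <;> simp
  -- total counts
  have hsumS : ∑ j : Fin N, c j = 2*N := fiber_sum (2*N) (fun k => S (m+k))
  have hsumT : ∑ j : Fin N, cT j = 2*N := fiber_sum (2*N) (fun k => T (m+k))
  -- parity of the support of p
  have hp_even : Even ((Finset.univ.filter (fun j => p j = true)).card) := by
    have h1 : (Finset.univ.filter (fun j => p j = true)).card = ∑ j : Fin N, (c j % 2) := by
      rw [Finset.card_filter]
      apply Finset.sum_congr rfl
      intro j _
      by_cases h : Odd (c j)
      · simp [hp, h, Nat.odd_iff.mp h]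
      · simp [hp, h, Nat.even_iff.mp (Nat.not_odd_iff_even.mp h)]
    have h2 : (∑ j : Fin N, (c j % 2)) % 2 = (∑ j : Fin N, c j) % 2 :=
      (Finset.sum_nat_mod _ _ _).symm
    rw [Nat.even_iff, h1, h2, hsumS]
    omega
  -- parity of the support of d
  have hd_even : Even ((Finset.univ.filter (fun j => d j = true)).card) := by
    by_cases hEN : Even N
    · have : Finset.univ.filter (fun j : Fin N => d j = true) = Finset.univ := by
        apply Finset.filter_true_of_mem
        intro j _; simp [hd, hEN]
      rw [this, Finset.card_univ, Fintype.card_fin]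
      exact hEN
    · have : Finset.univ.filter (fun j : Fin N => d j = true) = Finset.univ.erase 0 := by
        ext j
        simp [hd, hEN, Finset.mem_erase]
      rw [this, Finset.card_erase_of_mem (Finset.mem_univ 0), Finset.card_univ,
        Fintype.card_fin]
      have := Nat.odd_iff.mp (Nat.not_even_iff_odd.mp hEN)
      rw [Nat.even_iff]; omega
  -- parity of the support of q
  have hq_even : Even ((Finset.univ.filter (fun j => q j = true)).card) := by
    have hpt : ∀ j : Fin N, (if q j = true then 1 else 0) % 2 =
        ((if p j = true then 1 else 0) + (if d j = true then 1 else 0)) % 2 := by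
      intro j
      cases hpj : p j <;> cases hdj : d j <;> simp [hq, hpj, hdj]
    rw [Nat.even_iff, Finset.card_filter, Finset.sum_nat_mod]
    rw [Finset.sum_congr rfl (fun j _ => hpt j), ← Finset.sum_nat_mod,
      Finset.sum_add_distrib, ← Finset.card_filter, ← Finset.card_filter]
    rw [Nat.even_iff] at hp_even hd_even
    omega
  -- parity of cT
  have hcT_parity : ∀ u : Fin N, (Odd (cT u) ↔ q u = true) := by
    intro u
    by_cases hu : u ≠ 0
    · rw [hcT_ne u hu]
      by_cases hqu : q u = true <;> simp [hqu]
    · push_neg at hu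
      subst hu
      have h0 : cT 0 + ∑ u ∈ Finset.univ.erase 0, cT u = 2*N := by
        rw [Finset.add_sum_erase _ cT (Finset.mem_univ 0)]; exact hsumT
      have herase : ∑ u ∈ Finset.univ.erase 0, cT u =
          ∑ u ∈ Finset.univ.erase 0, (if q u = true then 1 else 0) :=
        Finset.sum_congr rfl (fun u hu => hcT_ne u (Finset.ne_of_mem_erase hu))
      have hr : (Finset.univ.filter (fun j => q j = true)).card =
          (if q 0 = true then 1 else 0) +
            ∑ u ∈ Finset.univ.erase 0, (if q u = true then 1 else 0) := by
        rw [Finset.card_filter, ← Finset.add_sum_erase _ _ (Finset.mem_univ 0)]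
      rw [Nat.even_iff] at hq_even
      rw [herase] at h0
      rw [hr] at hq_even
      rw [Nat.odd_iff]
      cases hq0 : q 0
      · simp [hq0] at hq_even h0 ⊢
        omega
      · simp [hq0] at hq_even h0 ⊢
        omega
  -- the perturbed point
  refine ⟨(T, E), ?_, ?_⟩
  · have hde : de E E = 0 := by simp [de]
    have hds : ds N S T ≤ (1/10:ℝ)^m := ds_tail_le (by omega) S T m hagree
    calc dC (S, E) (T, E) = de E E + ds N S T := rfl
      _ = ds N S T := by rw [hde, zero_add]
      _ ≤ (1/10:ℝ)^m := hds
      _ < ε := hm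
  · refine ⟨m + 2*N, ?_⟩
    rw [G0_iter, G0_iter]
    set X : CState N := runCI S E (m + 2*N) with hX
    set Y : CState N := runCI T E (m + 2*N) with hY
    set A : Fin N → ℕ := fun j => ((Finset.range m).filter (fun k => S k = j)).card with hA
    have hsplitS : ∀ j : Fin N,
        ((Finset.range (m + 2*N)).filter (fun k => S k = j)).card = A j + c j := by
      intro j
      rw [Finset.card_filter, Finset.sum_range_add, ← Finset.card_filter, ← Finset.card_filter]
    have hsplitT : ∀ j : Fin N,
        ((Finset.range (m + 2*N)).filter (fun k => T k = j)).card = A j + cT j := by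
      intro j
      rw [Finset.card_filter, Finset.sum_range_add, ← Finset.card_filter, ← Finset.card_filter]
      congr 2
      apply Finset.filter_congr
      intro k hk
      have hsk := hagree k (Finset.mem_range.mp hk)
      simp [hsk]
    have hqdec : ∀ j : Fin N, decide (Odd (cT j)) = q j := by
      intro j
      by_cases hodd : Odd (cT j)
      · rw [decide_eq_true hodd]
        exact ((hcT_parity j).mp hodd).symm
      · have hne : q j ≠ true := fun h => hodd ((hcT_parity j).mpr h)
        rw [decide_eq_false hodd]
        exact (Bool.eq_false_iff.mpr hne).symm
    have keyj : ∀ j : Fin N, (¬ (X j = Y j)) ↔ d j = true := by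
      intro j
      rw [hX, hY, runCI_parity, runCI_parity, hsplitS j, hsplitT j, decide_odd_add,
        decide_odd_add, hqdec j]
      have hpdec : decide (Odd (c j)) = p j := rfl
      rw [hpdec]
      have hqj : q j = xor (p j) (d j) := rfl
      rw [hqj]
      have boolkey : ∀ a pb db e : Bool,
          (¬ (xor (xor a pb) e = xor (xor a (xor pb db)) e)) ↔ db = true := by decide
      exact boolkey _ _ _ _
    have hfeq : Finset.univ.filter (fun j => ¬ (X j = Y j)) =
        Finset.univ.filter (fun j => d j = true) := by
      ext j
      simp only [Finset.mem_filter, Finset.mem_univ, true_and]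
      exact keyj j
    have hdsnn : 0 ≤ ds N (fun k => S (k + (m + 2*N))) (fun k => T (k + (m + 2*N))) :=
      ds_nonneg _ _
    have hdC : dC (fun k => S (k + (m + 2*N)), X) (fun k => T (k + (m + 2*N)), Y) =
        de X Y + ds N (fun k => S (k + (m + 2*N))) (fun k => T (k + (m + 2*N))) := rfl
    rw [hdC]
    have hdeval : de X Y = ((Finset.univ.filter (fun j => d j = true)).card : ℝ) := by
      rw [de_eq_card, hfeq]
    by_cases hEN : Even N
    · have hall : Finset.univ.filter (fun j : Fin N => d j = true) = Finset.univ := by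
        apply Finset.filter_true_of_mem
        intro j _; simp [hd, hEN]
      rw [hdeval, hall, Finset.card_univ, Fintype.card_fin]
      have h2 : (2:ℝ) ≤ N := by exact_mod_cast hN
      linarith
    · have herase : Finset.univ.filter (fun j : Fin N => d j = true) =
          Finset.univ.erase 0 := by
        ext j
        simp [hd, hEN, Finset.mem_erase]
      rw [hdeval, herase, Finset.card_erase_of_mem (Finset.mem_univ 0), Finset.card_univ,
        Fintype.card_fin]
      have hN3 : 3 ≤ N := by
        rcases Nat.even_or_odd N with h | h
        · exact absurd h hEN
        · rcases h with ⟨t, ht⟩; omega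
      have h3 : (3:ℝ) ≤ N := by exact_mod_cast hN3
      have hcast : ((N - 1 : ℕ) : ℝ) = (N : ℝ) - 1 := by
        rw [Nat.cast_sub (by omega)]; norm_num
      rw [hcast]
      linarith

end CI
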